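/- For n ≥ 2, the minimum size of a 2-monopoly in K_n □ K_n equals n. -/
import Mathlib


open SimpleGraph

/-- `M` is a `t`-monopoly in `G`: every vertex outside `M` has at least `t` neighbors in `M`. -/
def IsMonopoly {V : Type*} (G : SimpleGraph V) (t : ℕ) (M : Set V) : Prop :=
  ∀ v ∉ M, t ≤ (G.neighborSet v ∩ M).ncard

/-- The `t`-monopoly number: least cardinality of a `t`-monopoly. -/
noncomputable def monNum {V : Type*} (G : SimpleGraph V) (t : ℕ) : ℕ :=
  sInf {k | ∃ M : Set V, IsMonopoly G t M ∧ M.ncard = k}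

lemma diag_mem (n : ℕ) (hn : 2 ≤ n) :
    n ∈ {k | ∃ M : Set (Fin n × Fin n),
      IsMonopoly ((completeGraph (Fin n)).boxProd (completeGraph (Fin n))) 2 M ∧ M.ncard = k} := by
  refine ⟨Set.range (fun i : Fin n => (i, i)), ?_, ?_⟩
  · rintro ⟨a, b⟩ hv
    have hab : a ≠ b := by
      intro h; exact hv ⟨a, by simp [h]⟩
    have h1 : ((a, a) : Fin n × Fin n) ∈
        ((completeGraph (Fin n)).boxProd (completeGraph (Fin n))).neighborSet (a, b) ∩
          Set.range (fun i : Fin n => (i, i)) := by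
      constructor
      · simp [SimpleGraph.boxProd_adj, completeGraph, hab.symm]
      · exact ⟨a, rfl⟩
    have h2 : ((b, b) : Fin n × Fin n) ∈
        ((completeGraph (Fin n)).boxProd (completeGraph (Fin n))).neighborSet (a, b) ∩
          Set.range (fun i : Fin n => (i, i)) := by
      constructor
      · simp [SimpleGraph.boxProd_adj, completeGraph, hab]
      · exact ⟨b, rfl⟩
    have hne : ((a, a) : Fin n × Fin n) ≠ (b, b) := by
      simp [hab]
    have := Set.one_lt_ncard_iff (Set.toFinite _) |>.mpr ⟨_, _, h1, h2, hne⟩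
    omega
  · have hinj : Function.Injective (fun i : Fin n => ((i, i) : Fin n × Fin n)) := by
      intro a b h; simpa using congrArg Prod.fst h
    rw [← Set.image_univ, Set.ncard_image_of_injective _ hinj, Set.ncard_univ]
    simp

/-- For `n ≥ 2`, `mon₂(K_n □ K_n) = n`. -/
theorem mon2_rook (n : ℕ) (hn : 2 ≤ n) :
    monNum ((completeGraph (Fin n)).boxProd (completeGraph (Fin n))) 2 = n := by
  apply le_antisymm
  · exact Nat.sInf_le (diag_mem n hn)
  · refine le_csInf ⟨n, diag_mem n hn⟩ ?_
    rintro k ⟨M, hM, rfl⟩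
    by_contra hlt
    push_neg at hlt
    have hex : ∀ (f : Fin n × Fin n → Fin n), ∃ i, i ∉ f '' M := by
      intro f
      by_contra h
      push_neg at h
      have hsub : (Set.univ : Set (Fin n)) ⊆ f '' M := fun i _ => h i
      have h1 : (Set.univ : Set (Fin n)).ncard ≤ (f '' M).ncard :=
        Set.ncard_le_ncard hsub (Set.toFinite _)
      have h2 : (f '' M).ncard ≤ M.ncard := Set.ncard_image_le (Set.toFinite _)
      rw [Set.ncard_univ] at h1
      simp at h1
      omega
    obtain ⟨i, hi⟩ := hex Prod.fst
    obtain ⟨j, hj⟩ := hex Prod.snd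
    have hv : (i, j) ∉ M := fun h => hi ⟨(i, j), h, rfl⟩
    have h2 := hM (i, j) hv
    have hempty :
        ((completeGraph (Fin n)).boxProd (completeGraph (Fin n))).neighborSet (i, j) ∩ M
          = ∅ := by
      ext ⟨x, y⟩
      simp only [Set.mem_inter_iff, SimpleGraph.mem_neighborSet, SimpleGraph.boxProd_adj,
        Set.mem_empty_iff_false, iff_false, not_and]
      rintro (⟨-, h⟩ | ⟨-, h⟩) hm
      · exact hj ⟨(x, y), hm, h.symm⟩
      · exact hi ⟨(x, y), hm, h.symm⟩
    rw [hempty] at h2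
    simp at h2
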